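/- Let G be a finite abelian group of even order n whose exponent is not divisible by 4, and let A ⊆ G with |A| = n/2. Then G has a subgroup H of index 2 such that |A ∩ H| ≠ |A ∩ (G \ H)|. -/

import Mathlib

private lemma zmod2_cases : ∀ z : ZMod 2, z = 0 ∨ z = 1 := by decide

private lemma zmod2_add_one : (1 : ZMod 2) + 1 = 0 := by decide

open Finset Pointwise Classical in
theorem stmt_2 {G : Type*} [AddCommGroup G] [Fintype G] [DecidableEq G]
    (hn : Even (Fintype.card G)) (hexp : ¬ (4 ∣ AddMonoid.exponent G))
    (A : Finset G) (hA : 2 * A.card = Fintype.card G) :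
    ∃ H : AddSubgroup G, H.index = 2 ∧
      (A.filter (fun a => a ∈ H)).card ≠ (A.filter (fun a => a ∉ H)).card := by
  by_contra hcon
  push_neg at hcon
  haveI : Fact (Nat.Prime 2) := ⟨Nat.prime_two⟩
  classical
  -- the subgroup of doubles 2G
  set K : AddSubgroup G := ((2 : ℕ) • (AddMonoidHom.id G)).range with hKdef
  have hKmem : ∀ x : G, 2 • x ∈ K := fun x => ⟨x, by simp⟩
  -- an element of order two
  obtain ⟨t, ht⟩ := exists_prime_addOrderOf_dvd_card (G := G) 2 hn.two_dvd
  have ht0 : 2 • t = 0 := by rw [← ht]; exact addOrderOf_nsmul_eq_zero t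
  have htne : t ≠ 0 := by
    intro h; rw [h, addOrderOf_zero] at ht; omega
  -- K has odd order
  have hKodd : Odd (Nat.card K) := by
    rcases Nat.even_or_odd (Nat.card K) with he | h
    · exfalso
      haveI : Fintype K := Fintype.ofFinite K
      obtain ⟨u, hu⟩ := exists_prime_addOrderOf_dvd_card (G := K) 2 (by
        rw [← Nat.card_eq_fintype_card]; exact he.two_dvd)
      have h2u : (2 : ℕ) • u = 0 := by rw [← hu]; exact addOrderOf_nsmul_eq_zero u
      have hu0 : 2 • (u : G) = 0 := by
        have := congrArg (Subtype.val) h2u; simpa using this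
      have hune : (u : G) ≠ 0 := by
        intro h
        have : u = 0 := Subtype.ext h
        rw [this, addOrderOf_zero] at hu; omega
      obtain ⟨x, hx⟩ := u.2
      have hx' : 2 • x = (u : G) := by simpa using hx
      have hx4 : addOrderOf x ∣ 4 := by
        apply addOrderOf_dvd_iff_nsmul_eq_zero.mpr
        rw [show (4 : ℕ) = 2 * 2 from rfl, mul_smul, hx', hu0]
      have hx2 : ¬ addOrderOf x ∣ 2 := by
        intro h
        have := addOrderOf_dvd_iff_nsmul_eq_zero.mp h
        rw [hx'] at this
        exact hune this
      have hxo : addOrderOf x = 4 := by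
        obtain ⟨k, hk, hdk⟩ := (Nat.dvd_prime_pow Nat.prime_two).mp
          (show addOrderOf x ∣ 2 ^ 2 by simpa using hx4)
        interval_cases k <;> simp_all
      exact hexp (hxo ▸ AddMonoid.addOrder_dvd_exponent x)
    · exact h
  -- t is not in K
  have htK : t ∉ K := by
    intro h
    have horder : addOrderOf (⟨t, h⟩ : K) = 2 := by
      apply addOrderOf_eq_prime
      · exact Subtype.ext (by simpa using ht0)
      · intro hh; exact htne (by simpa [Subtype.ext_iff] using hh)
    have h2 : (2 : ℕ) ∣ Nat.card K := by
      have := addOrderOf_dvd_natCard (⟨t, h⟩ : K)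
      rwa [horder] at this
    obtain ⟨m, hm⟩ := hKodd
    obtain ⟨c, hc⟩ := h2
    omega
  -- G/K is a ZMod 2 module
  have hV2 : ∀ v : G ⧸ K, 2 • v = 0 := by
    intro v
    induction v using QuotientAddGroup.induction_on with
    | _ z =>
      rw [← QuotientAddGroup.mk_nsmul]
      exact (QuotientAddGroup.eq_zero_iff _).mpr (hKmem z)
  letI : Module (ZMod 2) (G ⧸ K) := AddCommGroup.zmodModule hV2
  haveI : Fintype (G ⧸ K) := Fintype.ofFinite _
  haveI hfinD : Finite (Module.Dual (ZMod 2) (G ⧸ K)) :=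
    Finite.of_injective (fun f => (f : (G ⧸ K) → ZMod 2)) DFunLike.coe_injective
  haveI : Fintype (Module.Dual (ZMod 2) (G ⧸ K)) := Fintype.ofFinite _
  set D := Module.Dual (ZMod 2) (G ⧸ K) with hDdef
  have hcardD : Fintype.card D = Fintype.card (G ⧸ K) := by
    rw [Module.card_eq_pow_finrank (K := ZMod 2) (V := D),
      Module.card_eq_pow_finrank (K := ZMod 2) (V := G ⧸ K), Subspace.dual_finrank_eq]
  -- separation
  have hsep : ∀ a : G, a ∉ K → ∃ g : D, g (QuotientAddGroup.mk a) ≠ 0 := by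
    intro a ha
    by_contra hno
    push_neg at hno
    have : (QuotientAddGroup.mk a : G ⧸ K) = 0 :=
      (Module.forall_dual_apply_eq_zero_iff (ZMod 2) _).mp hno
    exact ha ((QuotientAddGroup.eq_zero_iff a).mp this)
  have hzmod : ∀ z : ZMod 2, z = 0 ∨ z = 1 := zmod2_cases
  -- the sign function
  set ε : D → G → ℤ := fun f a => if f (QuotientAddGroup.mk a) = 0 then 1 else -1 with hεdef
  -- inner sum over A vanishes for nonzero functionals
  have hf0 : ∀ f : D, f ≠ 0 → ∑ a ∈ A, ε f a = 0 := by
    intro f hf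
    set φ : G →+ ZMod 2 := (f.toAddMonoidHom).comp (QuotientAddGroup.mk' K) with hφdef
    have hφa : ∀ a : G, φ a = f (QuotientAddGroup.mk a) := fun a => rfl
    have hsurj : Function.Surjective φ := by
      obtain ⟨v, hv⟩ : ∃ v, f v ≠ 0 := by
        by_contra hnv; push_neg at hnv; exact hf (LinearMap.ext hnv)
      obtain ⟨x, hx⟩ := QuotientAddGroup.mk'_surjective K v
      have hfx : φ x = 1 := by
        have hx' : φ x = f v := by rw [hφa]; exact congrArg f hx
        rw [hx']
        rcases hzmod (f v) with h | h
        · exact absurd h hv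
        · exact h
      intro c
      rcases hzmod c with rfl | rfl
      · exact ⟨0, map_zero φ⟩
      · exact ⟨x, hfx⟩
    have hidx : φ.ker.index = 2 := by
      rw [AddSubgroup.index_ker, AddMonoidHom.range_eq_top.mpr hsurj,
        AddSubgroup.card_top, Nat.card_eq_fintype_card, ZMod.card]
    have hc := hcon φ.ker hidx
    have hfe : A.filter (fun a => f (QuotientAddGroup.mk a) = 0)
        = A.filter (fun a => a ∈ φ.ker) :=
      Finset.filter_congr (fun a _ => by rw [AddMonoidHom.mem_ker, hφa])
    have hfe' : A.filter (fun a => ¬ f (QuotientAddGroup.mk a) = 0)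
        = A.filter (fun a => a ∉ φ.ker) :=
      Finset.filter_congr (fun a _ => by rw [AddMonoidHom.mem_ker, hφa])
    calc ∑ a ∈ A, ε f a
        = ∑ a ∈ A.filter (fun a => f (QuotientAddGroup.mk a) = 0), (1 : ℤ)
          + ∑ a ∈ A.filter (fun a => ¬ f (QuotientAddGroup.mk a) = 0), (-1 : ℤ) := by
          rw [hεdef]; exact Finset.sum_ite _ _
      _ = ((A.filter (fun a => a ∈ φ.ker)).card : ℤ)
          - ((A.filter (fun a => a ∉ φ.ker)).card : ℤ) := by
          rw [hfe, hfe', Finset.sum_const, Finset.sum_const]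
          push_cast; ring
      _ = 0 := by
          rw [sub_eq_zero]
          have hc' : (A.filter (fun a => a ∈ φ.ker)).card
              = (A.filter (fun a => a ∉ φ.ker)).card := by
            convert hc using 3 <;> first
              | rfl
              | exact Subsingleton.elim _ _
          exact_mod_cast hc'
  -- inner sum over D
  have ha_in : ∀ a ∈ K, ∑ g : D, ε g a = (Fintype.card D : ℤ) := by
    intro a ha
    have h0 : (QuotientAddGroup.mk a : G ⧸ K) = 0 := (QuotientAddGroup.eq_zero_iff a).mpr ha
    simp [hεdef, h0]
  have ha_out : ∀ a : G, a ∉ K → ∑ g : D, ε g a = 0 := by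
    intro a ha
    obtain ⟨g, hg⟩ := hsep a ha
    have hg1 : g (QuotientAddGroup.mk a) = 1 := by
      rcases hzmod (g (QuotientAddGroup.mk a)) with h | h
      · exact absurd h hg
      · exact h
    have key : ∀ f : D, ε (f + g) a = - ε f a := by
      intro f
      have hadd : (f + g) (QuotientAddGroup.mk a) = f (QuotientAddGroup.mk a) + 1 := by
        rw [LinearMap.add_apply, hg1]
      rcases hzmod (f (QuotientAddGroup.mk a)) with h | h
      · have h1 : (f + g) (QuotientAddGroup.mk a) = 1 := by rw [hadd, h, zero_add]
        simp [hεdef, h, h1]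
      · have h1 : (f + g) (QuotientAddGroup.mk a) = 0 := by rw [hadd, h, zmod2_add_one]
        simp [hεdef, h, h1]
    have h1 : ∑ f : D, ε (f + g) a = ∑ f : D, ε f a :=
      Fintype.sum_equiv (Equiv.addRight g) (fun f => ε (f + g) a) (fun f => ε f a)
        (fun f => rfl)
    have h2 : ∑ f : D, ε (f + g) a = - ∑ f : D, ε f a := by
      simp only [key]
      exact Finset.sum_neg_distrib _
    have := h1.symm.trans h2
    linarith
  -- total sum, two ways
  have hS1 : ∑ f : D, ∑ a ∈ A, ε f a = (A.card : ℤ) := by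
    rw [Finset.sum_eq_single (0 : D)]
    · have he1 : ∀ a : G, ε 0 a = 1 := by
        intro a
        show (if (0 : D) (QuotientAddGroup.mk a) = 0 then (1 : ℤ) else -1) = 1
        rw [if_pos (LinearMap.zero_apply _)]
      simp [he1]
    · intro f _ hf; exact hf0 f hf
    · intro h; exact absurd (Finset.mem_univ 0) h
  have hS2 : ∑ f : D, ∑ a ∈ A, ε f a
      = (Fintype.card D : ℤ) * ((A.filter (fun a => a ∈ K)).card : ℤ) := by
    rw [Finset.sum_comm]
    calc ∑ a ∈ A, ∑ f : D, ε f a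
        = ∑ a ∈ A, (if a ∈ K then (Fintype.card D : ℤ) else 0) := by
          refine Finset.sum_congr rfl (fun a _ => ?_)
          by_cases h : a ∈ K
          · rw [if_pos h]; exact ha_in a h
          · rw [if_neg h]; exact ha_out a h
      _ = ∑ a ∈ A.filter (fun a => a ∈ K), (Fintype.card D : ℤ)
          + ∑ a ∈ A.filter (fun a => ¬ a ∈ K), (0 : ℤ) := Finset.sum_ite _ _
      _ = (Fintype.card D : ℤ) * ((A.filter (fun a => a ∈ K)).card : ℤ) := by
          rw [Finset.sum_const, Finset.sum_const]
          push_cast; ring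
  -- conclude
  have hkey : A.card = Fintype.card D * (A.filter (fun a => a ∈ K)).card := by
    have := hS1.symm.trans hS2
    exact_mod_cast this
  have hGKV : Fintype.card G = Fintype.card (G ⧸ K) * Nat.card K := by
    have := AddSubgroup.card_eq_card_quotient_mul_card_addSubgroup K
    simpa [Nat.card_eq_fintype_card] using this
  have hVpos : 0 < Fintype.card (G ⧸ K) := Fintype.card_pos
  have heq : Fintype.card (G ⧸ K) * (2 * (A.filter (fun a => a ∈ K)).card)
      = Fintype.card (G ⧸ K) * Nat.card K := by
    rw [← hGKV, ← hA, hkey, hcardD]; ring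
  have : 2 * (A.filter (fun a => a ∈ K)).card = Nat.card K :=
    Nat.eq_of_mul_eq_mul_left hVpos heq
  obtain ⟨m, hm⟩ := hKodd
  omega
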